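/- With h(ξ) := ξ^{1/3}((1+√(1+ξ))^{1/3} + (1−√(1+ξ))^{1/3}) for ξ > 0, one has h(ξ) = 2/3 − 8/(81ξ) + o(1/ξ) as ξ → +∞. -/
import Mathlib


open Real Filter Asymptotics

/-- Real cube root: `cbrt x = sign(x) |x|^{1/3}`. -/
noncomputable def cbrt (x : ℝ) : ℝ := Real.sign x * |x| ^ ((1 : ℝ)/3)

/-- `h(ξ) = ξ^{1/3}((1+√(1+ξ))^{1/3} + (1-√(1+ξ))^{1/3})` with real cube roots. -/
noncomputable def hFun (ξ : ℝ) : ℝ :=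
  cbrt ξ * (cbrt (1 + Real.sqrt (1 + ξ)) + cbrt (1 - Real.sqrt (1 + ξ)))

lemma cbrt_of_pos {x : ℝ} (hx : 0 < x) : cbrt x = x ^ ((1:ℝ)/3) := by
  rw [cbrt, Real.sign_of_pos hx, abs_of_pos hx, one_mul]

lemma cbrt_of_neg {x : ℝ} (hx : x < 0) : cbrt x = -((-x) ^ ((1:ℝ)/3)) := by
  rw [cbrt, Real.sign_of_neg hx, abs_of_neg hx, neg_one_mul]

lemma rpow_third_cube {x : ℝ} (hx : 0 ≤ x) : (x ^ ((1:ℝ)/3))^3 = x := by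
  rw [← Real.rpow_natCast (x ^ ((1:ℝ)/3)) 3, ← Real.rpow_mul hx]
  norm_num

lemma hFun_cubic {ξ : ℝ} (hξ : 0 < ξ) : hFun ξ ^ 3 + 3*ξ*hFun ξ - 2*ξ = 0 := by
  set s := Real.sqrt (1 + ξ) with hs
  have hs2 : s ^ 2 = 1 + ξ := Real.sq_sqrt (by linarith)
  have hs0 : 0 ≤ s := Real.sqrt_nonneg _
  have hs1 : 1 < s := by nlinarith
  set t := ξ ^ ((1:ℝ)/3) with htdef
  set A := (1 + s) ^ ((1:ℝ)/3) with hAdef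
  set B := (s - 1) ^ ((1:ℝ)/3) with hBdef
  have ht : t ^ 3 = ξ := rpow_third_cube hξ.le
  have hA : A ^ 3 = 1 + s := rpow_third_cube (by linarith)
  have hB : B ^ 3 = s - 1 := rpow_third_cube (by linarith)
  have hAB : A * B = t := by
    rw [hAdef, hBdef, htdef, ← Real.mul_rpow (by linarith) (by linarith)]
    congr 1
    nlinarith
  have hform : hFun ξ = t * (A - B) := by
    rw [hFun, cbrt_of_pos hξ, cbrt_of_pos (by linarith : (0:ℝ) < 1 + s),
      cbrt_of_neg (by linarith : 1 - s < 0), neg_sub]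
    rw [htdef, hAdef, hBdef]
    ring
  rw [hform, ← ht]
  linear_combination t^3 * hA - t^3 * hB - 3*t^3*(A-B)*hAB

lemma hFun_pos {ξ : ℝ} (hξ : 0 < ξ) : 0 < hFun ξ := by
  by_contra h'
  push_neg at h'
  have h := hFun_cubic hξ
  have h3 : hFun ξ ^ 3 ≤ 0 := by nlinarith [sq_nonneg (hFun ξ)]
  have hxy : ξ * hFun ξ ≤ 0 := mul_nonpos_of_nonneg_of_nonpos hξ.le h'
  linarith

lemma hFun_lt {ξ : ℝ} (hξ : 0 < ξ) : hFun ξ < 2/3 := by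
  have h := hFun_cubic hξ
  have hp := hFun_pos hξ
  by_contra h'
  push_neg at h'
  have h3 : 0 < hFun ξ ^ 3 := by positivity
  have hxy : ξ * (hFun ξ - 2/3) ≥ 0 := mul_nonneg hξ.le (by linarith)
  nlinarith

/-- `h(ξ) = 2/3 - 8/(81ξ) + o(1/ξ)` as `ξ → +∞`. -/
theorem stmt_4 :
    (fun ξ : ℝ => hFun ξ - (2/3 - 8 / (81 * ξ))) =o[atTop] (fun ξ : ℝ => 1 / ξ) := by
  have hinv : Tendsto (fun ξ : ℝ => ξ⁻¹) atTop (nhds 0) := tendsto_inv_atTop_zero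
  have hy : Tendsto hFun atTop (nhds (2/3)) := by
    have hplus : Tendsto (fun ξ : ℝ => 4/9 * ξ⁻¹ + 3) atTop (nhds (4/9 * 0 + 3)) :=
      (hinv.const_mul _).add tendsto_const_nhds
    have h2 : Tendsto (fun ξ : ℝ => 2 / (4/9 * ξ⁻¹ + 3)) atTop (nhds (2 / (4/9 * 0 + 3))) :=
      tendsto_const_nhds.div hplus (by norm_num)
    have he : (2:ℝ) / (4/9 * 0 + 3) = 2/3 := by norm_num
    rw [he] at h2
    apply tendsto_of_tendsto_of_tendsto_of_le_of_le' h2 tendsto_const_nhds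
    · filter_upwards [eventually_gt_atTop (0:ℝ)] with ξ hξ
      have h := hFun_cubic hξ
      have hp := hFun_pos hξ
      have hl := hFun_lt hξ
      have hinvpos : 0 < ξ⁻¹ := by positivity
      rw [div_le_iff₀ (by positivity)]
      have key : hFun ξ ^ 3 * ξ⁻¹ + 3 * hFun ξ = 2 := by
        field_simp
        linarith
      have hyb : hFun ξ ^ 2 ≤ 4/9 := by nlinarith
      have hprod : 0 ≤ (4/9 - hFun ξ ^ 2) * (hFun ξ * ξ⁻¹) :=
        mul_nonneg (by linarith) (by positivity)
      nlinarith [hprod, key]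
    · filter_upwards [eventually_gt_atTop (0:ℝ)] with ξ hξ
      exact (hFun_lt hξ).le
  have hq : Tendsto (fun ξ : ℝ => (hFun ξ)^2 * ξ⁻¹) atTop (nhds 0) := by
    have := (hy.pow 2).mul hinv
    simpa using this
  have hmain : Tendsto (fun ξ : ℝ => (hFun ξ - (2/3 - 8 / (81 * ξ))) / (1/ξ))
      atTop (nhds 0) := by
    have hrhs : Tendsto (fun ξ : ℝ => -2 * (hFun ξ)^2 / (3 * ((hFun ξ)^2 * ξ⁻¹ + 3)) + 8/81)
        atTop (nhds (-2 * (2/3)^2 / (3 * (0 + 3)) + 8/81)) := by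
      have hnum : Tendsto (fun ξ : ℝ => -2 * (hFun ξ)^2) atTop (nhds (-2 * (2/3)^2)) :=
        (hy.pow 2).const_mul _
      have hden : Tendsto (fun ξ : ℝ => 3 * ((hFun ξ)^2 * ξ⁻¹ + 3)) atTop (nhds (3 * (0 + 3))) :=
        (hq.add tendsto_const_nhds).const_mul _
      exact (hnum.div hden (by norm_num)).add tendsto_const_nhds
    have he : -2 * ((2:ℝ)/3)^2 / (3 * (0 + 3)) + 8/81 = 0 := by norm_num
    rw [he] at hrhs
    apply hrhs.congr'
    filter_upwards [eventually_gt_atTop (0:ℝ)] with ξ hξ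
    have h := hFun_cubic hξ
    have hden0 : (0:ℝ) < (hFun ξ)^2 * ξ⁻¹ + 3 := by positivity
    field_simp
    ring_nf
    nlinarith [h]
  rw [isLittleO_iff_tendsto']
  · exact hmain
  · filter_upwards [eventually_gt_atTop (0:ℝ)] with ξ hξ h
    exact absurd h (by positivity)
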